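/- If G is a connected bipartite chain graph, then the square G² is the complement of a bipartite chain graph. More precisely, in G² each side X and Y of the bipartition of G becomes a clique, the edges between X and Y in G² are exactly those of G, and the bipartite complement H (with same parts X, Y, and edges xy for x∈X, y∈Y nonadjacent in G) admits a chain ordering. -/

import Mathlib

open SimpleGraph

/-- `P : Fin k → Set V` is a d₂-transitive partition of size `k` of the graph `G`:
its parts are nonempty, every vertex lies in exactly one part, and for `i < j`
every vertex of `P j` is within graph distance 2 of some vertex of `P i`. -/
def IsD2TransPartition {V : Type*} (G : SimpleGraph V) {k : ℕ} (P : Fin k → Set V) : Prop :=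
  (∀ i, (P i).Nonempty) ∧ (∀ v : V, ∃! i, v ∈ P i) ∧
  ∀ i j : Fin k, i < j → ∀ b ∈ P j, ∃ a ∈ P i, G.edist a b ≤ 2

/-- The d₂-transitivity `Tr_{d₂}(G)`: the maximum size of a d₂-transitive partition. -/
noncomputable def Trd2 {V : Type*} (G : SimpleGraph V) : ℕ :=
  sSup {k : ℕ | ∃ P : Fin k → Set V, IsD2TransPartition G P}

/-- The square of `G`: `x`, `y` adjacent iff `1 ≤ d_G(x,y) ≤ 2`. -/
def SimpleGraph.square {V : Type*} (G : SimpleGraph V) : SimpleGraph V where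
  Adj x y := x ≠ y ∧ G.edist x y ≤ 2
  symm := by
    constructor
    intro x y ⟨h1, h2⟩
    exact ⟨h1.symm, by rwa [SimpleGraph.edist_comm]⟩
  loopless := by constructor; intro x h; exact h.1 rfl

/-- `G` has the bipartite chain property on parts `X`, `Y`: the neighbourhoods of the
vertices within each part are totally ordered by inclusion (equivalently, the vertices
of each part can be ordered so that their neighbourhoods are nested). -/
def HasChainProperty {V : Type*} (G : SimpleGraph V) (X Y : Set V) : Prop :=
  (∀ x ∈ X, ∀ x' ∈ X, G.neighborSet x ⊆ G.neighborSet x' ∨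
      G.neighborSet x' ⊆ G.neighborSet x) ∧
  (∀ y ∈ Y, ∀ y' ∈ Y, G.neighborSet y ⊆ G.neighborSet y' ∨
      G.neighborSet y' ⊆ G.neighborSet y)

/-- The bipartite complement of `G` with respect to parts `X`, `Y`: edges are the
non-edges of `G` across the bipartition. -/
def bipComplement {V : Type*} (G : SimpleGraph V) (X Y : Set V) : SimpleGraph V where
  Adj a b := ((a ∈ X ∧ b ∈ Y) ∨ (a ∈ Y ∧ b ∈ X)) ∧ ¬G.Adj a b ∧ a ≠ b
  symm := by
    constructor
    intro a b ⟨h1, h2, h3⟩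
    exact ⟨by tauto, fun h => h2 h.symm, h3.symm⟩
  loopless := by constructor; intro a h; exact h.2.2 rfl

lemma neighbor_of_ne {V : Type*} (G : SimpleGraph V) (hconn : G.Connected)
    {u v : V} (h : u ≠ v) : ∃ z, G.Adj u z := by
  obtain ⟨p⟩ := hconn u v
  cases p with
  | nil => exact absurd rfl h
  | cons hadj q => exact ⟨_, hadj⟩

lemma adj_edist_le_one {V : Type*} {G : SimpleGraph V} {u v : V} (h : G.Adj u v) :
    G.edist u v ≤ 1 := le_of_eq (by rwa [SimpleGraph.edist_eq_one_iff_adj])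

lemma common_nbr_sq {V : Type*} {G : SimpleGraph V} {u v z : V}
    (h1 : G.Adj u z) (h2 : G.Adj z v) (hne : u ≠ v) : G.square.Adj u v := by
  refine ⟨hne, le_trans (G.edist_triangle (v := z)) ?_⟩
  calc G.edist u z + G.edist z v ≤ 1 + 1 := add_le_add (adj_edist_le_one h1) (adj_edist_le_one h2)
    _ = 2 := by norm_num

lemma mid_of_sq {V : Type*} {G : SimpleGraph V} {u v : V}
    (h : G.square.Adj u v) (hna : ¬ G.Adj u v) : ∃ z, G.Adj u z ∧ G.Adj z v := by
  obtain ⟨hne, hle⟩ := h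
  have hnt : G.edist u v ≠ ⊤ := by
    intro ht; simp [ht] at hle
  obtain ⟨p, hp⟩ := SimpleGraph.exists_walk_of_edist_ne_top hnt
  have hlen : (p.length : ℕ∞) ≤ 2 := by rw [hp]; exact hle
  have hlen2 : p.length ≤ 2 := by exact_mod_cast hlen
  cases p with
  | nil => exact absurd rfl hne
  | cons hadj q =>
    cases q with
    | nil => exact absurd hadj hna
    | cons hadj2 r =>
      cases r with
      | nil => exact ⟨_, hadj, hadj2⟩
      | cons hadj3 s => simp [SimpleGraph.Walk.length_cons] at hlen2

theorem stmt_13 {V : Type*} [Fintype V] (G : SimpleGraph V)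
    (X Y : Set V) (hdisj : Disjoint X Y) (hcover : X ∪ Y = Set.univ)
    (hbip : ∀ a b : V, G.Adj a b → ((a ∈ X ∧ b ∈ Y) ∨ (a ∈ Y ∧ b ∈ X)))
    (hchain : HasChainProperty G X Y) (hconn : G.Connected) :
    (∀ x ∈ X, ∀ x' ∈ X, x ≠ x' → G.square.Adj x x') ∧
    (∀ y ∈ Y, ∀ y' ∈ Y, y ≠ y' → G.square.Adj y y') ∧
    (∀ x ∈ X, ∀ y ∈ Y, (G.square.Adj x y ↔ G.Adj x y)) ∧
    HasChainProperty (bipComplement G X Y) X Y := by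
  have key : ∀ u v : V, u ≠ v →
      (G.neighborSet u ⊆ G.neighborSet v ∨ G.neighborSet v ⊆ G.neighborSet u) →
      G.square.Adj u v := by
    intro u v hne hsub
    obtain ⟨z, hz⟩ := neighbor_of_ne G hconn hne
    obtain ⟨w, hw⟩ := neighbor_of_ne G hconn hne.symm
    rcases hsub with hs | hs
    · exact common_nbr_sq hz (hs hz).symm hne
    · exact common_nbr_sq (hs hw) hw.symm hne
  have hXY : ∀ x ∈ X, x ∉ Y := fun x hx hy => hdisj.ne_of_mem hx hy rfl
  refine ⟨?_, ?_, ?_, ?_, ?_⟩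
  · intro x hx x' hx' hne
    exact key x x' hne (hchain.1 x hx x' hx')
  · intro y hy y' hy' hne
    exact key y y' hne (hchain.2 y hy y' hy')
  · intro x hx y hy
    constructor
    · intro hsq
      by_contra hna
      obtain ⟨z, hz1, hz2⟩ := mid_of_sq hsq hna
      have h1 := hbip x z hz1
      have h2 := hbip z y hz2
      have hxY := hXY x hx
      have hyX : y ∉ X := fun hyX => hXY y hyX hy
      rcases h1 with ⟨_, hzY⟩ | ⟨hxy, _⟩
      · rcases h2 with ⟨hzX, _⟩ | ⟨_, hyX'⟩
        · exact hXY z hzX hzY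
        · exact hyX hyX'
      · exact hxY hxy
    · intro ha
      exact ⟨ha.ne, le_trans (adj_edist_le_one ha) (by norm_num)⟩
  -- chain property of bipComplement, X side
  · intro x hx x' hx'
    have hnb : ∀ a, a ∈ X → (bipComplement G X Y).neighborSet a = Y \ G.neighborSet a := by
      intro a ha
      ext b
      simp only [SimpleGraph.mem_neighborSet, bipComplement, Set.mem_diff]
      constructor
      · rintro ⟨hor, hna, hne⟩
        rcases hor with ⟨_, hbY⟩ | ⟨haY, _⟩
        · exact ⟨hbY, hna⟩
        · exact absurd haY (hXY a ha)
      · rintro ⟨hbY, hna⟩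
        exact ⟨Or.inl ⟨ha, hbY⟩, hna, fun h => hXY a ha (h ▸ hbY)⟩
    rw [hnb x hx, hnb x' hx']
    rcases hchain.1 x hx x' hx' with hs | hs
    · exact Or.inr (Set.diff_subset_diff_right hs)
    · exact Or.inl (Set.diff_subset_diff_right hs)
  -- chain property of bipComplement, Y side
  · intro y hy y' hy'
    have hyX : ∀ a, a ∈ Y → a ∉ X := fun a ha hax => hXY a hax ha
    have hnb : ∀ a, a ∈ Y → (bipComplement G X Y).neighborSet a = X \ G.neighborSet a := by
      intro a ha
      ext b
      simp only [SimpleGraph.mem_neighborSet, bipComplement, Set.mem_diff]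
      constructor
      · rintro ⟨hor, hna, hne⟩
        rcases hor with ⟨haX, _⟩ | ⟨_, hbX⟩
        · exact absurd haX (hyX a ha)
        · exact ⟨hbX, hna⟩
      · rintro ⟨hbX, hna⟩
        exact ⟨Or.inr ⟨ha, hbX⟩, hna, fun h => hyX a ha (h ▸ hbX)⟩
    rw [hnb y hy, hnb y' hy']
    rcases hchain.2 y hy y' hy' with hs | hs
    · exact Or.inr (Set.diff_subset_diff_right hs)
    · exact Or.inl (Set.diff_subset_diff_right hs)
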